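/- (Theorem: reduction from Vertex Cover to MinECC, Theorem 8 of the paper.) Let G = (V, E) be a finite simple graph. Define an edge-colored hypergraph H whose vertex set is E, whose color set is V, and which has, for each u ∈ V, one hyperedge e_u = { e ∈ E : u ∈ e } of color u and unit weight. Then the minimum over all node colorings Y : E → V of the number of hyperedges e_u at which Y makes a mistake (i.e., for which some e ∈ E with u ∈ e has Y(e) ≠ u) equals the minimum size of a vertex cover of G. Moreover, every hyperedge e_u has exactly deg_G(u) elements, so the rank of H equals the maximum degree of G. -/

import Mathlib

open scoped Classical

/-- **Reduction from Vertex Cover to MinECC (Theorem 8).**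
Given a finite simple graph `G = (V, E)`, form the edge-colored hypergraph `H` whose
nodes are the edges of `G`, whose colors are the vertices of `G`, and which has, for
each vertex `u`, one unit-weight hyperedge `e_u = {e ∈ E : u ∈ e}` of color `u`.
Then the minimum over node colorings `Y : E → V` of the number of hyperedges at which
`Y` makes a mistake equals the minimum size of a vertex cover of `G`; moreover each
hyperedge `e_u` has exactly `deg_G(u)` elements. -/
theorem vertexCover_to_minECC {V : Type*} [Fintype V] [DecidableEq V]
    (G : SimpleGraph V) [DecidableRel G.Adj] :
    sInf { n : ℕ | ∃ Y : Sym2 V → V,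
        n = (Finset.univ.filter
              (fun u : V => ∃ e ∈ G.edgeFinset, u ∈ e ∧ Y e ≠ u)).card } =
      sInf { n : ℕ | ∃ S : Finset V,
        (∀ e ∈ G.edgeFinset, ∃ u ∈ S, u ∈ e) ∧ n = S.card } ∧
    ∀ u : V, (G.edgeFinset.filter (fun e => u ∈ e)).card = G.degree u := by
  constructor
  · apply le_antisymm
    · -- sInf mistakes ≤ sInf covers
      apply le_csInf
      · exact ⟨Finset.univ.card, Finset.univ, fun e he => by
          induction e with
          | h a b => exact ⟨a, Finset.mem_univ a, Sym2.mem_mk_left a b⟩, rfl⟩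
      rintro n ⟨S, hcov, rfl⟩
      -- define Y
      set Y : Sym2 V → V := fun e =>
        if h : ∃ u, u ∈ e ∧ u ∉ S then h.choose else (Quot.out e).1 with hY
      have hsub : (Finset.univ.filter
          (fun u : V => ∃ e ∈ G.edgeFinset, u ∈ e ∧ Y e ≠ u)) ⊆ S := by
        intro u hu
        simp only [Finset.mem_filter] at hu
        obtain ⟨-, e, he, hue, hne⟩ := hu
        by_contra huS
        have h : ∃ v, v ∈ e ∧ v ∉ S := ⟨u, hue, huS⟩
        have hYe : Y e = h.choose := by simp [hY, dif_pos h]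
        obtain ⟨hce, hcS⟩ := h.choose_spec
        obtain ⟨w, hwS, hwe⟩ := hcov e he
        apply hne
        rw [hYe]
        have key : ∀ x y z : V, x ∈ e → y ∈ e → z ∈ e →
            x ∈ S → y ∉ S → z ∉ S → z = y := by
          induction e with
          | h a b =>
            intro x y z hx hy hz hxS hyS hzS
            simp only [Sym2.mem_iff] at hx hy hz
            rcases hx with rfl | rfl <;> rcases hy with rfl | rfl <;>
              rcases hz with rfl | rfl <;> tauto
        exact key w u h.choose hwe hue h.choose_spec.1 hwS huS h.choose_spec.2
      exact le_trans (Nat.sInf_le ⟨Y, rfl⟩) (Finset.card_le_card hsub)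
    · -- sInf covers ≤ sInf mistakes
      apply le_csInf
      · exact ⟨_, fun e => (Quot.out e).1, rfl⟩
      rintro n ⟨Y, rfl⟩
      apply Nat.sInf_le
      refine ⟨_, ?_, rfl⟩
      intro e he
      induction e with
      | h a b =>
        have hab : a ≠ b := (G.ne_of_adj (by simpa using (SimpleGraph.mem_edgeFinset.mp he)))
        by_cases hA : Y s(a, b) = a
        · exact ⟨b, Finset.mem_filter.mpr ⟨Finset.mem_univ _,
            ⟨s(a,b), he, Sym2.mem_mk_right a b, by rw [hA]; exact hab⟩⟩,
            Sym2.mem_mk_right a b⟩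
        · exact ⟨a, Finset.mem_filter.mpr ⟨Finset.mem_univ _,
            ⟨s(a,b), he, Sym2.mem_mk_left a b, hA⟩⟩, Sym2.mem_mk_left a b⟩
  · intro u
    rw [← SimpleGraph.card_incidenceFinset_eq_degree]
    congr 1
    ext e
    simp [SimpleGraph.mem_incidenceFinset, SimpleGraph.incidenceSet,
      SimpleGraph.mem_edgeFinset, and_comm]
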